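/- For every natural number b and every real z ≠ 0, ∫_0^1 (1−u)^{−1/2} · u^{−b−3/2} · e^{−z²/(2u)} du = sgn(z) · √(2π) · e^{−z²/2} · Σ_{k=0}^{b} (2k−1)!! · C(b,k) · z^{−(2k+1)}, where C(b,k) denotes the binomial coefficient. -/

import Mathlib

open Finset Real MeasureTheory

-- Gamma at half integers
lemma gammaHalf (k : ℕ) : Real.Gamma ((k : ℝ) + 1/2)
    = ((2*k-1).doubleFactorial : ℝ) * Real.sqrt π / 2^k := by
  induction k with
  | zero => simpa using Real.Gamma_one_half_eq
  | succ k ih =>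
    have h1 : ((k+1 : ℕ) : ℝ) + 1/2 = ((k:ℝ) + 1/2) + 1 := by push_cast; ring
    rw [h1, Real.Gamma_add_one (by positivity), ih]
    have h2 : (2*(k+1)-1 : ℕ) = 2*k+1 := by omega
    rw [h2, Nat.doubleFactorial_add_one (2*k)]
    push_cast
    field_simp
    ring

lemma subst (b : ℕ) (c : ℝ) :
    ∫ u in Set.Ioo (0 : ℝ) 1,
        (1 - u) ^ (-(1 : ℝ) / 2) * u ^ (-(b : ℝ) - 3 / 2) * Real.exp (-(c * u⁻¹))
    = ∫ t in Set.Ioi (0:ℝ),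
        t ^ (-(1:ℝ)/2) * (1+t)^b * Real.exp (-(c * (1+t))) := by
  set g : ℝ → ℝ := fun t => t ^ (-(1:ℝ)/2) * (1+t)^b * Real.exp (-(c * (1+t))) with hg
  have himg : (fun u : ℝ => u⁻¹ - 1) '' Set.Ioo 0 1 = Set.Ioi 0 := by
    ext t
    constructor
    · rintro ⟨u, ⟨hu0, hu1⟩, rfl⟩
      have : 1 < u⁻¹ := (one_lt_inv₀ hu0).2 hu1
      simpa using this
    · intro ht
      have ht' : (0:ℝ) < t := ht
      refine ⟨(1+t)⁻¹, ⟨by positivity, ?_⟩, ?_⟩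
      · rw [inv_lt_one_iff₀]; right; linarith
      · show (1+t)⁻¹⁻¹ - 1 = t
        rw [inv_inv]; ring
  have hderiv : ∀ u ∈ Set.Ioo (0:ℝ) 1, HasDerivWithinAt (fun u : ℝ => u⁻¹ - 1)
      (-(u^2)⁻¹) (Set.Ioo 0 1) u := fun u hu =>
    ((hasDerivAt_inv hu.1.ne').sub_const 1).hasDerivWithinAt
  have hinj : Set.InjOn (fun u : ℝ => u⁻¹ - 1) (Set.Ioo 0 1) := by
    intro u hu v hv h
    have h' : u⁻¹ - 1 = v⁻¹ - 1 := h
    have : u⁻¹ = v⁻¹ := by linarith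
    exact inv_injective this
  have key := integral_image_eq_integral_abs_deriv_smul measurableSet_Ioo hderiv hinj g
  rw [himg] at key
  refine Eq.trans ?_ key.symm
  refine setIntegral_congr_fun measurableSet_Ioo fun u hu => ?_
  obtain ⟨hu0, hu1⟩ := hu
  have h1u : (0:ℝ) < 1 - u := by linarith
  have habs : |(-(u^2)⁻¹)| = (u^2)⁻¹ := by
    rw [abs_neg, abs_inv, abs_of_pos (by positivity)]
  rw [smul_eq_mul, habs]
  simp only [hg]
  have e0 : u⁻¹ - 1 = (1-u)/u := by field_simp
  have e1 : (u⁻¹ - 1) ^ (-(1:ℝ)/2) = (1-u) ^ (-(1:ℝ)/2) * u ^ ((1:ℝ)/2) := by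
    rw [e0, Real.div_rpow h1u.le hu0.le, neg_div, Real.rpow_neg hu0.le]
    rw [div_eq_mul_inv, inv_inv]
  have e2 : (1 + (u⁻¹ - 1)) = u⁻¹ := by ring
  rw [e1, e2]
  have e3 : ((u⁻¹)^b : ℝ) = u ^ (-(b:ℝ)) := by
    rw [← Real.rpow_natCast u⁻¹ b, ← Real.rpow_neg_one u, ← Real.rpow_mul hu0.le]
    norm_num
  have e4 : ((u^2)⁻¹ : ℝ) = u ^ (-2:ℝ) := by
    rw [← Real.rpow_natCast u 2, ← Real.rpow_neg hu0.le]
    norm_num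
  rw [e3, e4]
  rw [show u ^ (-(b:ℝ) - 3/2) = u ^ (-2:ℝ) * (u ^ ((1:ℝ)/2) * u ^ (-(b:ℝ))) by
    rw [← Real.rpow_add hu0, ← Real.rpow_add hu0]; ring_nf]
  ring

lemma step2 (b : ℕ) {c : ℝ} (hc : 0 < c) :
    ∫ t in Set.Ioi (0:ℝ), t ^ (-(1:ℝ)/2) * (1+t)^b * Real.exp (-(c * (1+t)))
    = Real.exp (-c) * ∑ k ∈ Finset.range (b+1),
        (b.choose k : ℝ) * ((1/c) ^ ((k:ℝ)+1/2) * Real.Gamma ((k:ℝ)+1/2)) := by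
  have hint : ∀ k : ℕ, IntegrableOn
      (fun t : ℝ => t ^ ((k:ℝ)+1/2-1) * Real.exp (-(c*t))) (Set.Ioi 0) := by
    intro k
    have h := integrableOn_rpow_mul_exp_neg_mul_rpow
      (s := (k:ℝ)+1/2-1) (p := 1) (by have := Nat.cast_nonneg (α := ℝ) k; linarith) zero_lt_one hc
    simpa [Real.rpow_one, neg_mul] using h
  calc ∫ t in Set.Ioi (0:ℝ), t ^ (-(1:ℝ)/2) * (1+t)^b * Real.exp (-(c * (1+t)))
      = ∫ t in Set.Ioi (0:ℝ), ∑ k ∈ Finset.range (b+1),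
          (Real.exp (-c) * (b.choose k : ℝ)) *
            (t ^ ((k:ℝ)+1/2-1) * Real.exp (-(c*t))) := by
        refine setIntegral_congr_fun measurableSet_Ioi fun t ht => ?_
        have ht' : (0:ℝ) < t := ht
        have h1 : (1+t)^b = ∑ k ∈ Finset.range (b+1), t^k * (b.choose k : ℝ) := by
          rw [show (1+t) = (t+1) by ring, add_pow]
          simp
        have h2 : Real.exp (-(c*(1+t))) = Real.exp (-c) * Real.exp (-(c*t)) := by
          rw [← Real.exp_add]; ring_nf
        rw [h1, h2, Finset.mul_sum, Finset.sum_mul]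
        refine Finset.sum_congr rfl fun k _ => ?_
        have h3 : t ^ (-(1:ℝ)/2) * t^k = t ^ ((k:ℝ)+1/2-1) := by
          rw [← Real.rpow_natCast t k, ← Real.rpow_add ht']
          congr 1; ring
        rw [← h3]; ring
    _ = ∑ k ∈ Finset.range (b+1), (Real.exp (-c) * (b.choose k : ℝ)) *
          ∫ t in Set.Ioi (0:ℝ), t ^ ((k:ℝ)+1/2-1) * Real.exp (-(c*t)) := by
        rw [integral_finset_sum _ fun k _ => ((hint k).const_mul _)]
        simp_rw [MeasureTheory.integral_const_mul]
    _ = _ := by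
        rw [Finset.mul_sum]
        refine Finset.sum_congr rfl fun k _ => ?_
        rw [integral_rpow_mul_exp_neg_mul_Ioi (by positivity) hc]
        ring

/-- Lemma 4: the exact value of `∫₀¹ (1−u)^{−1/2} u^{−b−3/2} e^{−z²/(2u)} du`. -/
theorem stmt_9 (b : ℕ) (z : ℝ) (hz : z ≠ 0) :
    ∫ u in Set.Ioo (0 : ℝ) 1,
        (1 - u) ^ (-(1 : ℝ) / 2) * u ^ (-(b : ℝ) - 3 / 2) * Real.exp (-z ^ 2 / (2 * u))
      = Real.sign z * Real.sqrt (2 * Real.pi) * Real.exp (-z ^ 2 / 2) *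
          ∑ k ∈ Finset.range (b + 1),
            ((2 * k - 1).doubleFactorial : ℝ) * (b.choose k : ℝ) *
              (z ^ (2 * k + 1))⁻¹ := by
  have hcpos : 0 < z^2/2 := by positivity
  have harg : ∀ u : ℝ, -z^2/(2*u) = -(z^2/2 * u⁻¹) := fun u => by ring
  simp_rw [harg]
  rw [subst b (z^2/2), step2 b hcpos]
  have hexp : Real.exp (-(z^2/2)) = Real.exp (-z^2/2) := by rw [neg_div]
  have hterm : ∀ k ∈ Finset.range (b+1),
      (b.choose k : ℝ) * ((1/(z^2/2)) ^ ((k:ℝ)+1/2) * Real.Gamma ((k:ℝ)+1/2))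
      = Real.sign z * Real.sqrt (2*π) *
          (((2*k-1).doubleFactorial : ℝ) * (b.choose k : ℝ) * (z^(2*k+1))⁻¹) := by
    intro k _
    have habs : |z| ≠ 0 := abs_ne_zero.mpr hz
    have hpow : (1/(z^2/2)) ^ ((k:ℝ)+1/2) = Real.sqrt 2 * 2^k * (|z|^(2*k+1))⁻¹ := by
      rw [one_div_div, Real.div_rpow (by norm_num) (by positivity)]
      have h2 : (2:ℝ) ^ ((k:ℝ)+1/2) = 2^k * Real.sqrt 2 := by
        rw [Real.rpow_add two_pos, Real.rpow_natCast,
          show Real.sqrt 2 = (2:ℝ) ^ ((1:ℝ)/2) from Real.sqrt_eq_rpow 2]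
      have h3 : (z^2 : ℝ) ^ ((k:ℝ)+1/2) = |z|^(2*k+1) := by
        rw [← sq_abs z, ← Real.rpow_natCast |z| 2, ← Real.rpow_mul (abs_nonneg z),
          show ((2:ℕ):ℝ) * ((k:ℝ)+1/2) = ((2*k+1 : ℕ):ℝ) by push_cast; ring,
          Real.rpow_natCast]
      rw [h2, h3, div_eq_mul_inv]
      ring
    have hsign : Real.sign z * (z^(2*k+1))⁻¹ = (|z|^(2*k+1))⁻¹ := by
      rcases hz.lt_or_gt with h | h
      · rw [Real.sign_of_neg h, abs_of_neg h,
          Odd.neg_pow ⟨k, by ring⟩ z, inv_neg]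
        ring
      · rw [Real.sign_of_pos h, abs_of_pos h, one_mul]
    rw [gammaHalf k, hpow, Real.sqrt_mul (by norm_num) π, ← hsign]
    have h2k : (2:ℝ)^k ≠ 0 := by positivity
    field_simp
  rw [Finset.sum_congr rfl hterm, ← Finset.mul_sum, hexp]
  ring
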